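/- Let k be a field and let A = k[X_1,…,X_m,Y,Z,T]/(α(X_1,…,X_m)Y − f(Z,T) − h(X_1,…,X_m,Z,T)) be an integral domain, where f(Z,T) ≠ 0 and every prime factor of α in k[X_1,…,X_m] divides h in k[X_1,…,X_m,Z,T]. Then A is a flat algebra over E = k[x_1,…,x_m], the subring generated by the images of X_1,…,X_m. -/

import Mathlib

noncomputable section
open MvPolynomial

/-- The polynomial `H = α(X_1,…,X_m)·Y - f(Z,T) - h(X_1,…,X_m,Z,T)` inside
`k[X_1,…,X_m][Y,Z,T]` (variable `0` of `Fin 3` is `Y`, variables `1, 2` are `Z, T`). -/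
def HH (k : Type) [Field k] (m : ℕ) (α : MvPolynomial (Fin m) k)
    (f : MvPolynomial (Fin 2) k) (h : MvPolynomial (Fin 2) (MvPolynomial (Fin m) k)) :
    MvPolynomial (Fin 3) (MvPolynomial (Fin m) k) :=
  MvPolynomial.C α * MvPolynomial.X 0
    - rename Fin.succ (MvPolynomial.map (algebraMap k (MvPolynomial (Fin m) k)) f)
    - rename Fin.succ h

/-- The affine domain `A = k[X_1,…,X_m,Y,Z,T]/(αY - f(Z,T) - h)`. -/
def Aring (k : Type) [Field k] (m : ℕ) (α : MvPolynomial (Fin m) k)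
    (f : MvPolynomial (Fin 2) k) (h : MvPolynomial (Fin 2) (MvPolynomial (Fin m) k)) : Type :=
  MvPolynomial (Fin 3) (MvPolynomial (Fin m) k) ⧸ Ideal.span {HH k m α f h}

instance (k : Type) [Field k] (m : ℕ) (α : MvPolynomial (Fin m) k)
    (f : MvPolynomial (Fin 2) k) (h : MvPolynomial (Fin 2) (MvPolynomial (Fin m) k)) :
    CommRing (Aring k m α f h) := inferInstanceAs (CommRing (_ ⧸ _))

instance (k : Type) [Field k] (m : ℕ) (α : MvPolynomial (Fin m) k)
    (f : MvPolynomial (Fin 2) k) (h : MvPolynomial (Fin 2) (MvPolynomial (Fin m) k)) :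
    Algebra (MvPolynomial (Fin m) k) (Aring k m α f h) :=
  inferInstanceAs (Algebra _ (_ ⧸ _))

instance (k : Type) [Field k] (m : ℕ) (α : MvPolynomial (Fin m) k)
    (f : MvPolynomial (Fin 2) k) (h : MvPolynomial (Fin 2) (MvPolynomial (Fin m) k)) :
    Algebra k (Aring k m α f h) := inferInstanceAs (Algebra _ (_ ⧸ _))



/-! ### Kronecker substitution / multivariate McCoy -/

section McCoy
variable {S : Type} [CommRing S]

private lemma enc_inj (D : ℕ) : ∀ (n : ℕ) (d e : Fin n → ℕ), (∀ i, d i < D) → (∀ i, e i < D) →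
    (∑ i : Fin n, D ^ (i : ℕ) * d i) = (∑ i : Fin n, D ^ (i : ℕ) * e i) → ∀ i, d i = e i := by
  intro n
  induction n with
  | zero => intro d e _ _ _ i; exact i.elim0
  | succ n ih =>
    intro d e hd he hsum i
    have hD : 0 < D := lt_of_le_of_lt (Nat.zero_le _) (hd 0)
    rw [Fin.sum_univ_succ, Fin.sum_univ_succ] at hsum
    have h0 : ∀ (x : Fin (n+1) → ℕ),
        (∑ i : Fin n, D ^ ((i.succ : Fin (n+1)) : ℕ) * x i.succ)
          = D * ∑ i : Fin n, D ^ (i : ℕ) * x i.succ := by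
      intro x
      rw [Finset.mul_sum]
      refine Finset.sum_congr rfl fun j _ => ?_
      rw [Fin.val_succ, pow_succ]
      ring
    rw [h0, h0] at hsum
    simp only [Fin.val_zero, pow_zero, one_mul] at hsum
    have h1 : d 0 = e 0 := by
      have := congrArg (· % D) hsum
      simpa [Nat.add_mul_mod_self_left, Nat.mod_eq_of_lt (hd 0), Nat.mod_eq_of_lt (he 0)] using this
    rw [h1] at hsum
    have h2 : (∑ i : Fin n, D ^ (i : ℕ) * d i.succ) = ∑ i : Fin n, D ^ (i : ℕ) * e i.succ :=
      Nat.eq_of_mul_eq_mul_left hD (Nat.add_left_cancel hsum)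
    refine Fin.cases h1 (fun j => ?_) i
    exact ih (fun j => d j.succ) (fun j => e j.succ) (fun j => hd j.succ) (fun j => he j.succ) h2 j

private lemma kron_coeff {n : ℕ} (D : ℕ) (p : MvPolynomial (Fin n) S)
    (hb : ∀ v ∈ p.support, ∀ i, v i < D) (d : Fin n →₀ ℕ) (hd : ∀ i, d i < D) :
    (MvPolynomial.aeval (fun i : Fin n => (Polynomial.X : Polynomial S) ^ D ^ (i : ℕ)) p).coeff
      (∑ i : Fin n, D ^ (i : ℕ) * d i) = MvPolynomial.coeff d p := by
  have key : ∀ (v : Fin n →₀ ℕ) (c : S),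
      (MvPolynomial.aeval (fun i : Fin n => (Polynomial.X : Polynomial S) ^ D ^ (i : ℕ)))
          (monomial v c)
        = Polynomial.C c * Polynomial.X ^ (∑ i : Fin n, D ^ (i : ℕ) * v i) := by
    intro v c
    rw [aeval_monomial, Finsupp.prod_fintype _ _ (fun i => pow_zero _)]
    simp_rw [← pow_mul]
    rw [Finset.prod_pow_eq_pow_sum]
    rw [Polynomial.algebraMap_eq]
  conv_lhs => rw [p.as_sum]
  rw [map_sum, Polynomial.finset_sum_coeff]
  have hterm : ∀ v ∈ p.support,
      ((MvPolynomial.aeval (fun i : Fin n => (Polynomial.X : Polynomial S) ^ D ^ (i : ℕ)))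
        (monomial v (coeff v p))).coeff (∑ i : Fin n, D ^ (i : ℕ) * d i)
      = if v = d then coeff v p else 0 := by
    intro v hv
    rw [key, Polynomial.coeff_C_mul, Polynomial.coeff_X_pow]
    by_cases hvd : v = d
    · simp [hvd]
    · rw [if_neg hvd, if_neg, mul_zero]
      intro hE
      apply hvd
      ext i
      exact enc_inj D n v d (hb v hv) hd hE.symm i
  rw [Finset.sum_congr rfl hterm]
  by_cases hdp : d ∈ p.support
  · rw [Finset.sum_ite_eq' p.support d (fun v => coeff v p)]
    simp [hdp]
  · rw [Finset.sum_eq_zero, eq_comm]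
    · exact MvPolynomial.notMem_support_iff.mp hdp
    · intro v hv
      rw [if_neg]
      rintro rfl; exact hdp hv

private lemma kron_inj {n : ℕ} (D : ℕ) (p : MvPolynomial (Fin n) S)
    (hb : ∀ v ∈ p.support, ∀ i, v i < D)
    (hp : (MvPolynomial.aeval (fun i : Fin n => (Polynomial.X : Polynomial S) ^ D ^ (i : ℕ))) p
      = 0) : p = 0 := by
  by_contra hne
  obtain ⟨d, hd⟩ := MvPolynomial.ne_zero_iff.mp hne
  have hdb : ∀ i, d i < D := hb d (MvPolynomial.mem_support_iff.mpr hd)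
  have := kron_coeff D p hb d hdb
  rw [hp, Polynomial.coeff_zero] at this
  exact hd this.symm

private lemma mccoy {n : ℕ} {G q : MvPolynomial (Fin n) S} (hGq : G * q = 0) (hq : q ≠ 0) :
    ∃ s : S, s ≠ 0 ∧ s • G = 0 := by
  set D := G.totalDegree + q.totalDegree + 1 with hDdef
  have bound : ∀ p : MvPolynomial (Fin n) S, p.totalDegree < D → ∀ v ∈ p.support, ∀ i, v i < D := by
    intro p hp v hv i
    have h1 : v i ≤ ∑ j ∈ v.support, v j := by
      by_cases hmem : i ∈ v.support
      · exact Finset.single_le_sum (fun _ _ => Nat.zero_le _) hmem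
      · simp [Finsupp.notMem_support_iff.mp hmem]
    have h2 : (v.sum fun _ e => e) ≤ p.totalDegree := le_totalDegree hv
    have : v i ≤ p.totalDegree := le_trans h1 h2
    omega
  set ψ := (MvPolynomial.aeval (fun i : Fin n => (Polynomial.X : Polynomial S) ^ D ^ (i : ℕ)) :
      MvPolynomial (Fin n) S →ₐ[S] Polynomial S) with hψ
  have hψq : ψ q ≠ 0 := fun h0 => hq (kron_inj D q (bound q (by omega)) h0)
  have hψG : ψ G ∉ nonZeroDivisors (Polynomial S) := by
    intro hmem
    exact hψq (mem_nonZeroDivisors_iff_right.mp hmem (ψ q)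
      (by rw [mul_comm, ← map_mul, hGq, map_zero]))
  obtain ⟨s, hs0, hs⟩ := Polynomial.notMem_nonZeroDivisors_iff.mp hψG
  refine ⟨s, hs0, ?_⟩
  have hmap : ψ (s • G) = 0 := by rw [map_smul, hs]
  refine kron_inj D (s • G) ?_ hmap
  intro v hv
  exact bound G (by omega) v (Finsupp.support_smul hv)

end McCoy



private lemma exists_prime_factor_mem {R : Type} [CommRing R] [IsDomain R]
    [UniqueFactorizationMonoid R] {p : Ideal R} (hp : p.IsPrime) (a : R) :
    a ≠ 0 → a ∈ p → ∃ t : R, Prime t ∧ t ∣ a ∧ t ∈ p := by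
  refine UniqueFactorizationMonoid.induction_on_prime a ?_ ?_ ?_
  · intro ha _; exact absurd rfl ha
  · intro x hx _ hmem; exact absurd (Ideal.eq_top_of_isUnit_mem _ hmem hx) hp.ne_top
  · intro b t hb ht ih _ hmem
    rcases hp.mem_or_mem hmem with hmem' | hmem'
    · exact ⟨t, ht, dvd_mul_right _ _, hmem'⟩
    · obtain ⟨u, hu1, hu2, hu3⟩ := ih hb hmem'
      exact ⟨u, hu1, hu2.mul_left _, hu3⟩

private lemma map_mk_eq_zero_iff {R : Type} [CommRing R] {σ : Type} (I : Ideal R)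
    (p : MvPolynomial σ R) :
    MvPolynomial.map (Ideal.Quotient.mk I) p = 0
      ↔ p ∈ Ideal.map (C : R →+* MvPolynomial σ R) I := by
  rw [MvPolynomial.mem_map_C_iff]
  constructor
  · intro h0 d
    have := congrArg (coeff d) h0
    rwa [MvPolynomial.coeff_map, coeff_zero, Ideal.Quotient.eq_zero_iff_mem] at this
  · intro hmem
    ext d
    rw [MvPolynomial.coeff_map, coeff_zero, Ideal.Quotient.eq_zero_iff_mem]
    exact hmem d

-- coefficient of HH at (single 0 1) is α ; at mapDomain succ d₂ it is the stated value
section HHcoeff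
variable (k : Type) [Field k] (m : ℕ) (α : MvPolynomial (Fin m) k)
    (f : MvPolynomial (Fin 2) k) (h : MvPolynomial (Fin 2) (MvPolynomial (Fin m) k))


private lemma zero_notin_range_succ : (0 : Fin 3) ∉ Set.range (Fin.succ : Fin 2 → Fin 3) := by
  rintro ⟨j, hj⟩; exact (Fin.succ_ne_zero j) hj

private lemma coeff_rename_succ_zero (t : MvPolynomial (Fin 2) (MvPolynomial (Fin m) k)) :
    coeff (Finsupp.single (0 : Fin 3) 1) (rename Fin.succ t) = 0 := by
  apply coeff_rename_eq_zero
  intro u hu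
  exfalso
  have h2 := Finsupp.mapDomain_notin_range u (0 : Fin 3) (zero_notin_range_succ)
  rw [hu, Finsupp.single_eq_same] at h2
  exact one_ne_zero h2

private lemma HH_coeff_single : coeff (Finsupp.single (0 : Fin 3) 1) (HH k m α f h) = α := by
  rw [HH, coeff_sub, coeff_sub, coeff_C_mul, coeff_rename_succ_zero, coeff_rename_succ_zero,
    coeff_X']
  simp

private lemma HH_coeff_mapDomain (d₂ : Fin 2 →₀ ℕ) :
    coeff (Finsupp.mapDomain Fin.succ d₂) (HH k m α f h)
      = - algebraMap k (MvPolynomial (Fin m) k) (coeff d₂ f) - coeff d₂ h := by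
  rw [HH, coeff_sub, coeff_sub, coeff_C_mul,
    coeff_rename_mapDomain Fin.succ (Fin.succ_injective _),
    coeff_rename_mapDomain Fin.succ (Fin.succ_injective _), MvPolynomial.coeff_map, coeff_X']
  rw [if_neg, mul_zero, zero_sub]
  intro heq
  have h2 := Finsupp.mapDomain_notin_range d₂ (0 : Fin 3) (zero_notin_range_succ)
  rw [← heq, Finsupp.single_eq_same] at h2
  exact one_ne_zero h2

variable {k m α f h}

private lemma HH_coeff_not_mem (hf : f ≠ 0) (hα0 : α ≠ 0)
    (hdiv : ∀ p : MvPolynomial (Fin m) k, Prime p → p ∣ α → MvPolynomial.C p ∣ h)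
    (p : Ideal (MvPolynomial (Fin m) k)) (hp : p.IsPrime) :
    ∃ d, MvPolynomial.coeff d (HH k m α f h) ∉ p := by
  by_cases hmem : α ∈ p
  · obtain ⟨t, ht, htd, htp⟩ := exists_prime_factor_mem hp α hα0 hmem
    obtain ⟨h'', hh⟩ := hdiv t ht htd
    obtain ⟨d₂, hd₂⟩ := MvPolynomial.ne_zero_iff.mp hf
    refine ⟨Finsupp.mapDomain Fin.succ d₂, fun hin => ?_⟩
    rw [HH_coeff_mapDomain] at hin
    have hB : coeff d₂ h ∈ p := by
      rw [hh, coeff_C_mul]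
      exact Ideal.mul_mem_right _ p htp
    have hA : algebraMap k (MvPolynomial (Fin m) k) (coeff d₂ f) ∈ p := by
      have hsum := p.add_mem hin hB
      have h2 : -(algebraMap k (MvPolynomial (Fin m) k)) (coeff d₂ f) - coeff d₂ h + coeff d₂ h
          = -(algebraMap k (MvPolynomial (Fin m) k)) (coeff d₂ f) := by ring
      rw [h2] at hsum
      simpa using p.neg_mem hsum
    exact hp.ne_top (Ideal.eq_top_of_isUnit_mem _ hA
      ((isUnit_iff_ne_zero.mpr hd₂).map (algebraMap k (MvPolynomial (Fin m) k))))
  · exact ⟨Finsupp.single 0 1, by rw [HH_coeff_single]; exact hmem⟩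

end HHcoeff

section FlatSec
open TensorProduct
set_option synthInstance.maxHeartbeats 1000000
set_option maxHeartbeats 1000000

private lemma flat_of_regular {R : Type} [CommRing R] {σ : Type} (G : MvPolynomial σ R)
    (hreg : ∀ (I : Ideal R) (q : MvPolynomial σ R),
      G * q ∈ Ideal.map (C : R →+* MvPolynomial σ R) I
        → q ∈ Ideal.map (C : R →+* MvPolynomial σ R) I) :
    Module.Flat R (MvPolynomial σ R ⧸ Ideal.span {G}) := by
  rw [Module.Flat.iff_rTensor_injective']
  intro I
  set π : MvPolynomial σ R →ₗ[R] MvPolynomial σ R ⧸ Ideal.span {G} := (Ideal.Quotient.mkₐ R (Ideal.span {G})).toLinearMap with hπdef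
  have hπs : Function.Surjective π := Ideal.Quotient.mk_surjective
  set e : I ⊗[R] MvPolynomial σ R →ₗ[R] MvPolynomial σ R :=
    (TensorProduct.lid R (MvPolynomial σ R)).toLinearMap ∘ₗ LinearMap.rTensor (MvPolynomial σ R) I.subtype with hedef
  have he : ∀ (i : I) (p : MvPolynomial σ R), e (i ⊗ₜ p) = (i : R) • (p : MvPolynomial σ R) := by
    intro i p
    simp [hedef]
  have heinj : Function.Injective e := by
    have h1 : Function.Injective (LinearMap.rTensor (MvPolynomial σ R) I.subtype) :=
      (Module.Flat.iff_rTensor_injective' (R := R) (M := MvPolynomial σ R)).mp inferInstance I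
    rw [hedef, LinearMap.coe_comp]
    exact (TensorProduct.lid R (MvPolynomial σ R)).injective.comp h1
  have hmul : ∀ (a : MvPolynomial σ R) (z : I ⊗[R] MvPolynomial σ R),
      e (LinearMap.lTensor I (LinearMap.mulLeft R a) z) = a * e z := by
    intro a z
    induction z using TensorProduct.induction_on with
    | zero => simp
    | tmul i p => simp [he, mul_smul_comm]
    | add x y hx hy => simp only [map_add, hx, hy, mul_add]
  have hrange : ∀ z : I ⊗[R] MvPolynomial σ R, e z ∈ Ideal.map (C : R →+* MvPolynomial σ R) I := by
    intro z
    induction z using TensorProduct.induction_on with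
    | zero => simp
    | tmul i p =>
      rw [he, smul_eq_C_mul]
      exact Ideal.mul_mem_right _ _ (Ideal.mem_map_of_mem _ i.2)
    | add x y hx hy => rw [map_add]; exact Ideal.add_mem _ hx hy
  have hsurj : ∀ p ∈ Ideal.map (C : R →+* MvPolynomial σ R) I, ∃ z : I ⊗[R] MvPolynomial σ R, e z = p := by
    intro p hp
    have hp' : p ∈ Ideal.span ((C : R →+* MvPolynomial σ R) '' ↑I) := hp
    refine Submodule.span_induction ?_ ?_ ?_ ?_ hp'
    · rintro _ ⟨r, hr, rfl⟩
      exact ⟨⟨r, hr⟩ ⊗ₜ 1, by rw [he, smul_eq_C_mul, mul_one]⟩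
    · exact ⟨0, map_zero e⟩
    · rintro x y _ _ ⟨zx, rfl⟩ ⟨zy, rfl⟩; exact ⟨zx + zy, map_add e zx zy⟩
    · rintro a x _ ⟨z, rfl⟩
      exact ⟨LinearMap.lTensor I (LinearMap.mulLeft R a) z, by rw [hmul]; rfl⟩
  rw [injective_iff_map_eq_zero]
  intro x hx
  obtain ⟨y, rfl⟩ := LinearMap.lTensor_surjective I hπs x
  have hcomm : ∀ z : I ⊗[R] MvPolynomial σ R,
      (TensorProduct.lid R (MvPolynomial σ R ⧸ Ideal.span {G})) (LinearMap.rTensor (MvPolynomial σ R ⧸ Ideal.span {G}) I.subtype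
        (LinearMap.lTensor I π z)) = π (e z) := by
    intro z
    induction z using TensorProduct.induction_on with
    | zero => simp
    | tmul i p => simp [he]
    | add a b ha hb => simp only [map_add, ha, hb]
  have h1 : π (e y) = 0 := by
    rw [← hcomm y, hx, map_zero]
  have h2 : e y ∈ Ideal.span {G} := by
    rwa [hπdef, AlgHom.toLinearMap_apply, Ideal.Quotient.mkₐ_eq_mk,
      Ideal.Quotient.eq_zero_iff_mem] at h1
  obtain ⟨q, hq⟩ := Ideal.mem_span_singleton'.mp h2
  have hGq : G * q ∈ Ideal.map (C : R →+* MvPolynomial σ R) I := by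
    rw [mul_comm, hq]; exact hrange y
  obtain ⟨z, hz⟩ := hsurj q (hreg I q hGq)
  have hey : e (LinearMap.lTensor I (LinearMap.mulLeft R G) z) = e y := by
    rw [hmul, hz, ← hq, mul_comm]
  have hy : y = LinearMap.lTensor I (LinearMap.mulLeft R G) z := (heinj hey).symm
  have hcomp : π ∘ₗ LinearMap.mulLeft R G = 0 := by
    ext p
    simp only [LinearMap.comp_apply, LinearMap.mulLeft_apply, LinearMap.zero_apply, hπdef,
      AlgHom.toLinearMap_apply, Ideal.Quotient.mkₐ_eq_mk]
    exact Ideal.Quotient.eq_zero_iff_mem.mpr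
      (Ideal.mul_mem_right _ _ (Ideal.subset_span rfl))
  rw [hy, ← LinearMap.lTensor_comp_apply, hcomp, LinearMap.lTensor_zero, LinearMap.zero_apply]

end FlatSec

/-- Lemma 3.1. `A` is a flat algebra over `E = k[x_1,…,x_m]`. -/
theorem stmt3 (k : Type) [Field k] (m : ℕ) (α : MvPolynomial (Fin m) k)
    (f : MvPolynomial (Fin 2) k) (h : MvPolynomial (Fin 2) (MvPolynomial (Fin m) k))
    (hf : f ≠ 0)
    (hα : α ∉ Set.range (algebraMap k (MvPolynomial (Fin m) k)))
    (hdiv : ∀ p : MvPolynomial (Fin m) k, Prime p → p ∣ α → MvPolynomial.C p ∣ h)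
    [IsDomain (Aring k m α f h)] :
    Module.Flat (MvPolynomial (Fin m) k) (Aring k m α f h) := by
  have hα0 : α ≠ 0 := fun h0 => hα ⟨0, by rw [map_zero, h0]⟩
  refine flat_of_regular (HH k m α f h) ?_
  intro I q hGq
  rw [← map_mk_eq_zero_iff]
  by_contra hq0
  have hG0 : MvPolynomial.map (Ideal.Quotient.mk I) (HH k m α f h) *
      MvPolynomial.map (Ideal.Quotient.mk I) q = 0 := by
    rw [← map_mul]
    exact (map_mk_eq_zero_iff I _).mpr hGq
  obtain ⟨s, hs0, hs⟩ := mccoy hG0 hq0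
  obtain ⟨c, rfl⟩ := Ideal.Quotient.mk_surjective s
  have hcd : ∀ d, MvPolynomial.coeff d (HH k m α f h)
      ∈ Submodule.colon I (Ideal.span {c}) := by
    intro d
    rw [Ideal.mem_colon_span_singleton]
    have h2 := congrArg (MvPolynomial.coeff d) hs
    rw [MvPolynomial.coeff_smul, MvPolynomial.coeff_map, coeff_zero, smul_eq_mul,
      ← map_mul, Ideal.Quotient.eq_zero_iff_mem, mul_comm] at h2
    exact h2
  have hJc : Submodule.colon I (Ideal.span {c}) ≠ ⊤ := by
    intro ht
    apply hs0
    rw [Ideal.Quotient.eq_zero_iff_mem]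
    have h1 : (1 : MvPolynomial (Fin m) k) ∈ Submodule.colon I (Ideal.span {c}) :=
      ht ▸ Submodule.mem_top
    rwa [Ideal.mem_colon_span_singleton, one_mul] at h1
  obtain ⟨pm, hpm, hle⟩ := Ideal.exists_le_maximal _ hJc
  obtain ⟨d, hd⟩ := HH_coeff_not_mem hf hα0 hdiv pm hpm.isPrime
  exact hd (hle (hcd d))
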